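/- The group G is contracting with nucleus N = {1, a, b, c, d}; that is, for every g ∈ G there is an integer n such that the state g|_w lies in N for every word w ∈ X* of length at least n, and N is the minimal finite subset of G with this property. -/

import Mathlib

open Equiv

/-! ## The binary rooted tree and the twisted twin of the Grigorchuk group

We identify the vertex set of the infinite rooted binary tree with `V = List Bool`
(the free monoid `X*` on `X = {0,1}`), and realize automorphisms of the tree as
permutations of `V`.  The generators `a, b, c, d` of the twisted twin `G` of the
Grigorchuk group are defined by the recursive rules
`a(xw) = (¬x)w`, `ψ(b) = (c,a)`, `ψ(c) = (a,d)`, `ψ(d) = (1,b)`. -/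

abbrev V : Type := List Bool

def actA : V → V
  | [] => []
  | x :: w => (!x) :: w

theorem actA_invol : Function.Involutive actA := fun w => by
  cases w with
  | nil => rfl
  | cons x w => simp [actA]

mutual
  def actB : V → V
    | [] => []
    | false :: w => false :: actC w
    | true :: w => true :: actA w
  def actC : V → V
    | [] => []
    | false :: w => false :: actA w
    | true :: w => true :: actD w
  def actD : V → V
    | [] => []
    | false :: w => false :: w
    | true :: w => true :: actB w
end

theorem act_invol3 (w : V) :
    actB (actB w) = w ∧ actC (actC w) = w ∧ actD (actD w) = w := by
  induction w with
  | nil => exact ⟨rfl, rfl, rfl⟩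
  | cons x w ih =>
    cases x <;>
      exact ⟨by simp [actB, actC, actD, ih.1, ih.2.1, ih.2.2, actA_invol w],
        by simp [actB, actC, actD, ih.1, ih.2.1, ih.2.2, actA_invol w],
        by simp [actB, actC, actD, ih.1, ih.2.1, ih.2.2, actA_invol w]⟩

theorem actB_invol : Function.Involutive actB := fun w => (act_invol3 w).1
theorem actC_invol : Function.Involutive actC := fun w => (act_invol3 w).2.1
theorem actD_invol : Function.Involutive actD := fun w => (act_invol3 w).2.2

/-- The generator `a`: the root swap. -/
def a : Perm V := actA_invol.toPerm actA
/-- The generator `b`, with `ψ(b) = (c, a)`. -/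
def b : Perm V := actB_invol.toPerm actB
/-- The generator `c`, with `ψ(c) = (a, d)`. -/
def c : Perm V := actC_invol.toPerm actC
/-- The generator `d`, with `ψ(d) = (1, b)`. -/
def d : Perm V := actD_invol.toPerm actD

@[simp] theorem coe_a : ⇑a = actA := rfl
@[simp] theorem coe_b : ⇑b = actB := rfl
@[simp] theorem coe_c : ⇑c = actC := rfl
@[simp] theorem coe_d : ⇑d = actD := rfl

/-- The twisted twin of the Grigorchuk group. -/
def G : Subgroup (Perm V) := Subgroup.closure {a, b, c, d}

theorem a_mem_G : a ∈ G := Subgroup.subset_closure (by simp)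
theorem b_mem_G : b ∈ G := Subgroup.subset_closure (by simp)
theorem c_mem_G : c ∈ G := Subgroup.subset_closure (by simp)
theorem d_mem_G : d ∈ G := Subgroup.subset_closure (by simp)

/-- `hasState g v s` says that the state (section) of `g` at the vertex `v` is `s`,
i.e. `g (v ++ w) = g v ++ s w` for all `w`. -/
def hasState (g : Perm V) (v : V) (s : Perm V) : Prop :=
  ∀ w : V, g (v ++ w) = g v ++ s w

def vstarFun (v : V) (f : V → V) : V → V :=
  fun w => if v <+: w then v ++ f (w.drop v.length) else w

theorem vstarFun_comp (v : V) (f f' : V → V) (w : V) :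
    vstarFun v f (vstarFun v f' w) = vstarFun v (f ∘ f') w := by
  by_cases h : v <+: w
  · obtain ⟨t, rfl⟩ := h
    simp [vstarFun, List.prefix_append, List.drop_left]
  · simp [vstarFun, h]

theorem vstarFun_id (v w : V) : vstarFun v id w = w := by
  by_cases h : v <+: w
  · obtain ⟨t, rfl⟩ := h
    simp [vstarFun, List.prefix_append, List.drop_left]
  · simp [vstarFun, h]

/-- `vstar v g` is the automorphism `v * g`, acting as `g` on the subtree rooted
at `v` and trivially elsewhere. -/
def vstar (v : V) (g : Perm V) : Perm V where
  toFun := vstarFun v g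
  invFun := vstarFun v g.symm
  left_inv := fun w => by
    rw [vstarFun_comp, Equiv.symm_comp_self]
    exact vstarFun_id v w
  right_inv := fun w => by
    rw [vstarFun_comp, Equiv.self_comp_symm]
    exact vstarFun_id v w

/-- `XstarSub n H` is the subgroup `Xⁿ * H`: the product of the copies `v * H`
over all vertices `v` of level `n` (equivalently, the subgroup they generate). -/
def XstarSub (n : ℕ) (H : Subgroup (Perm V)) : Subgroup (Perm V) :=
  Subgroup.closure {p | ∃ v : V, ∃ g : Perm V, v.length = n ∧ g ∈ H ∧ p = vstar v g}

/-- `pairPerm s₀ s₁ = ψ⁻¹(s₀, s₁)`: the first-level stabilizer element whose states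
at the vertices `0` and `1` are `s₀` and `s₁`. -/
def pairPerm (s₀ s₁ : Perm V) : Perm V := vstar [false] s₀ * vstar [true] s₁

/-- The permutations fixing every vertex of level `n`. -/
def stabLevel (n : ℕ) : Subgroup (Perm V) where
  carrier := {g : Perm V | ∀ v : V, v.length = n → g v = v}
  one_mem' := fun _ _ => rfl
  mul_mem' := by
    intro g h hg hh v hv
    show g (h v) = v
    rw [hh v hv, hg v hv]
  inv_mem' := by
    intro g hg v hv
    show g⁻¹ v = v
    conv_lhs => rw [← hg v hv]
    exact Equiv.symm_apply_apply g v

/-- The `n`-th level stabilizer `Stab_G(n)` of `G`. -/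
def stabG (n : ℕ) : Subgroup (Perm V) := G ⊓ stabLevel n

/-- The commutator `[x, y] = x⁻¹ y⁻¹ x y` (paper convention). -/
def pc (x y : Perm V) : Perm V := x⁻¹ * y⁻¹ * x * y
/-- Conjugation `xʸ = y⁻¹ x y`. -/
def cj (x y : Perm V) : Perm V := y⁻¹ * x * y

/-- The normal closure in `G` of a subset `S` of `G`. -/
def ncl (S : Set (Perm V)) : Subgroup (Perm V) :=
  Subgroup.closure {x | ∃ s ∈ S, ∃ g ∈ G, x = g⁻¹ * s * g}

/-- `K = ⟨[a,b],[b,c],[b,d],[c,d], bcd⟩^G`. -/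
def K : Subgroup (Perm V) := ncl {pc a b, pc b c, pc b d, pc c d, b * c * d}

/-- The subgroup `[K, G]`. -/
def KG : Subgroup (Perm V) := ⁅K, G⁆

/-- The subgroup `C`, generated by `[K,G]` and `[a,b][b,c]`. -/
def Csub : Subgroup (Perm V) := KG ⊔ Subgroup.closure {pc a b * pc b c}

/-- `γ_n(G)`, the `n`-th term of the lower central series of `G` (starting at `γ₁ = G`),
viewed as a subgroup of `Perm V`. -/
def gammaG (n : ℕ) : Subgroup (Perm V) :=
  Subgroup.map G.subtype ((⊤ : Subgroup ↥G).lowerCentralSeries (n - 1))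


/-- The nucleus `N = {1, a, b, c, d}`. -/
def nucleus : Set (Perm V) := {1, a, b, c, d}

/-! ### Auxiliary development for stmt3 -/

inductive Gen | A | B | C | D
deriving DecidableEq

open Gen

def gp : Gen → Perm V
  | A => a | B => b | C => c | D => d

def wp (l : List Gen) : Perm V := (l.map gp).prod

def act1 : Gen → Bool → Bool
  | A, x => !x | _, x => x

def stateGen : Gen → Bool → List Gen
  | A, _ => []
  | B, false => [C] | B, true => [A]
  | C, false => [A] | C, true => [D]
  | D, false => [] | D, true => [B]

def act1L (l : List Gen) (x : Bool) : Bool := l.foldr act1 x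

def stateL : List Gen → Bool → List Gen
  | [], _ => []
  | g :: t, x => stateGen g (act1L t x) ++ stateL t x

@[simp] theorem wp_nil : wp [] = 1 := rfl
@[simp] theorem wp_cons (g : Gen) (t : List Gen) : wp (g :: t) = gp g * wp t := by
  simp [wp]
@[simp] theorem wp_append (s t : List Gen) : wp (s ++ t) = wp s * wp t := by
  simp [wp]

theorem gp_apply (g : Gen) (x : Bool) (w : V) :
    gp g (x :: w) = act1 g x :: wp (stateGen g x) w := by
  cases g <;> cases x <;>
    simp [gp, act1, stateGen, wp, actA, actB, actC, actD]

theorem wp_apply (l : List Gen) (x : Bool) (w : V) :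
    wp l (x :: w) = act1L l x :: wp (stateL l x) w := by
  induction l with
  | nil => simp [act1L, stateL]
  | cons g t ih =>
    simp only [wp_cons, Perm.mul_apply, ih, gp_apply, stateL, wp_append, act1L,
      List.foldr_cons]

def stateV (l : List Gen) : V → List Gen
  | [] => l
  | x :: v => stateV (stateL l x) v

def actV (l : List Gen) : V → V
  | [] => []
  | x :: v => act1L l x :: actV (stateL l x) v

theorem wp_apply_v (v : V) : ∀ (l : List Gen) (w : V),
    wp l (v ++ w) = actV l v ++ wp (stateV l v) w := by
  induction v with
  | nil => intro l w; simp [actV, stateV]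
  | cons x v ih => intro l w; simp [actV, stateV, wp_apply, ih]

theorem wp_empty : ∀ l : List Gen, wp l [] = [] := by
  intro l
  induction l with
  | nil => rfl
  | cons g t ih =>
    simp only [wp_cons, Perm.mul_apply, ih]
    cases g <;> rfl

theorem wp_v (l : List Gen) (v : V) : wp l v = actV l v := by
  have := wp_apply_v v l []
  simpa [wp_empty] using this

theorem hasState_wp (l : List Gen) (v : V) :
    hasState (wp l) v (wp (stateV l v)) := by
  intro w
  rw [wp_apply_v, wp_v l v]

theorem hasState_unique {g : Perm V} {v : V} {s t : Perm V}
    (hs : hasState g v s) (ht : hasState g v t) : s = t := by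
  apply Equiv.ext; intro w
  have := (hs w).symm.trans (ht w)
  exact List.append_cancel_left this

theorem stateV_append (u v : V) : ∀ l : List Gen,
    stateV l (u ++ v) = stateV (stateV l u) v := by
  induction u with
  | nil => intro l; rfl
  | cons x u ih => intro l; simp [stateV, ih]

/-! ### Costs and contraction -/

def cost : Gen → ℕ
  | A => 1 | _ => 2

def costL (l : List Gen) : ℕ := (l.map cost).sum

@[simp] theorem costL_nil : costL [] = 0 := rfl
@[simp] theorem costL_cons (g : Gen) (t : List Gen) :
    costL (g :: t) = cost g + costL t := by simp [costL]
@[simp] theorem costL_append (s t : List Gen) :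
    costL (s ++ t) = costL s + costL t := by simp [costL]

theorem cost_stateGen_le (g : Gen) (x : Bool) : costL (stateGen g x) ≤ cost g := by
  cases g <;> cases x <;> decide

theorem cost_stateL_le (l : List Gen) (x : Bool) : costL (stateL l x) ≤ costL l := by
  induction l with
  | nil => simp [stateL]
  | cons g t ih =>
    simp only [stateL, costL_append, costL_cons]
    exact Nat.add_le_add (cost_stateGen_le _ _) ih

theorem cost_stateL_lt_of_A {l : List Gen} (h : A ∈ l) (x : Bool) :
    costL (stateL l x) < costL l := by
  induction l with
  | nil => simp at h
  | cons g t ih =>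
    simp only [stateL, costL_append, costL_cons]
    rcases List.mem_cons.mp h with hg | ht
    · subst hg
      have : costL (stateGen A (act1L t x)) = 0 := by cases act1L t x <;> rfl
      have h2 := cost_stateL_le t x
      have hc : cost A = 1 := rfl
      simp only [this]
      omega
    · have h1 := cost_stateGen_le g (act1L t x)
      have h2 := ih ht
      omega

theorem act1L_of_noA {l : List Gen} (h : A ∉ l) (x : Bool) : act1L l x = x := by
  induction l with
  | nil => rfl
  | cons g t ih =>
    have hg : g ≠ A := fun e => h (by simp [e])
    have ht : A ∉ t := fun e => h (List.mem_cons_of_mem _ e)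
    show act1 g (act1L t x) = x
    rw [ih ht]
    cases g <;> simp_all [act1]

theorem cost_stateL_lt_of_mem {l : List Gen} {g : Gen} (hA : A ∉ l) (hg : g ∈ l)
    {x : Bool} (hstrict : costL (stateGen g x) < cost g) :
    costL (stateL l x) < costL l := by
  induction l with
  | nil => simp at hg
  | cons h t ih =>
    have ht : A ∉ t := fun e => hA (List.mem_cons_of_mem _ e)
    simp only [stateL, costL_append, costL_cons, act1L_of_noA ht]
    rcases List.mem_cons.mp hg with hh | hh
    · subst hh
      have := cost_stateL_le t x
      omega
    · have h1 := cost_stateGen_le h x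
      have h2 := ih ht hh
      omega

theorem stateL_of_noA {l : List Gen} (hA : A ∉ l) (x : Bool) :
    stateL l x = l.flatMap (fun g => stateGen g x) := by
  induction l with
  | nil => rfl
  | cons g t ih =>
    have ht : A ∉ t := fun e => hA (List.mem_cons_of_mem _ e)
    simp only [stateL, act1L_of_noA ht, List.flatMap_cons, ih ht]

/-- the map `C ↦ D, D ↦ B` used in the two-level analysis -/
def tmap : Gen → Gen
  | A => A | B => A | C => D | D => B

theorem stateL_true_of_CD {l : List Gen} (h : ∀ g ∈ l, g = C ∨ g = D) :
    stateL l true = l.map tmap := by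
  induction l with
  | nil => rfl
  | cons g t ih =>
    have ht : ∀ g ∈ t, g = C ∨ g = D := fun g hg => h g (List.mem_cons_of_mem _ hg)
    have hA : A ∉ t := fun e => by rcases ht A e with h' | h' <;> simp at h'
    simp only [stateL, act1L_of_noA hA, List.map_cons, ih ht]
    rcases h g (by simp) with rfl | rfl <;> rfl

theorem contract2 {l : List Gen} (hch : List.Chain' Ne l) (hlen : 2 ≤ l.length)
    (x y : Bool) : costL (stateL (stateL l x) y) < costL l := by
  by_cases hA : A ∈ l
  · calc costL (stateL (stateL l x) y) ≤ costL (stateL l x) := cost_stateL_le _ _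
      _ < costL l := cost_stateL_lt_of_A hA x
  · -- no A in l
    cases x with
    | false =>
      by_cases hCD : C ∈ l ∨ D ∈ l
      · have h1 : costL (stateL l false) < costL l := by
          rcases hCD with h | h
          · exact cost_stateL_lt_of_mem hA h (by decide)
          · exact cost_stateL_lt_of_mem hA h (by decide)
        calc costL (stateL (stateL l false) y) ≤ costL (stateL l false) :=
              cost_stateL_le _ _
          _ < costL l := h1
      · -- all letters are B
        exfalso
        push_neg at hCD
        have hallB : ∀ g ∈ l, g = B := by
          intro g hg
          cases g with
          | A => exact absurd hg hA
          | B => rfl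
          | C => exact absurd hg hCD.1
          | D => exact absurd hg hCD.2
        match l, hlen with
        | g :: h :: t, _ =>
          have := hch.rel_head
          rw [hallB g (by simp), hallB h (by simp)] at this
          exact this rfl
    | true =>
      by_cases hB : B ∈ l
      · have h1 : costL (stateL l true) < costL l :=
          cost_stateL_lt_of_mem hA hB (by decide)
        calc costL (stateL (stateL l true) y) ≤ costL (stateL l true) :=
              cost_stateL_le _ _
          _ < costL l := h1
      · have hCD : ∀ g ∈ l, g = C ∨ g = D := by
          intro g hg
          cases g with
          | A => exact absurd hg hA
          | B => exact absurd hg hB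
          | C => exact Or.inl rfl
          | D => exact Or.inr rfl
        have hm : stateL l true = l.map tmap := stateL_true_of_CD hCD
        -- l contains both C and D
        obtain ⟨g, h, t, rfl⟩ : ∃ g h t, l = g :: h :: t := by
          match l, hlen with
          | g :: h :: t, _ => exact ⟨g, h, t, rfl⟩
        have hne : g ≠ h := hch.rel_head
        have hDm : D ∈ (g :: h :: t).map tmap := by
          rcases hCD g (by simp) with rfl | rfl
          · exact by simp [tmap]
          · rcases hCD h (by simp) with rfl | rfl
            · simp [tmap]
            · exact absurd rfl hne
        have hBm : B ∈ (g :: h :: t).map tmap := by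
          rcases hCD g (by simp) with rfl | rfl
          · rcases hCD h (by simp) with rfl | rfl
            · exact absurd rfl hne
            · simp [tmap]
          · exact by simp [tmap]
        have hAm : A ∉ (g :: h :: t).map tmap := by
          intro hmem
          rw [List.mem_map] at hmem
          obtain ⟨u, hu, htu⟩ := hmem
          rcases hCD u hu with rfl | rfl <;> simp [tmap] at htu
        have hcosteq : costL ((g :: h :: t).map tmap) = costL (g :: h :: t) := by
          simp only [costL, List.map_map]
          congr 1
          apply List.map_congr_left
          intro u hu
          rcases hCD u hu with rfl | rfl <;> rfl
        rw [hm, ← hcosteq]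
        cases y with
        | false => exact cost_stateL_lt_of_mem hAm hDm (by decide)
        | true => exact cost_stateL_lt_of_mem hAm hBm (by decide)

/-! ### Reduction of words -/

theorem gp_sq (g : Gen) : gp g * gp g = 1 := by
  apply Equiv.ext; intro w
  cases g
  · exact actA_invol w
  · exact actB_invol w
  · exact actC_invol w
  · exact actD_invol w

theorem gp_inv (g : Gen) : (gp g)⁻¹ = gp g := inv_eq_of_mul_eq_one_right (gp_sq g)

def redCons (g : Gen) : List Gen → List Gen
  | [] => [g]
  | h :: r => if g = h then r else g :: h :: r

def red : List Gen → List Gen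
  | [] => []
  | g :: t => redCons g (red t)

theorem wp_redCons (g : Gen) (m : List Gen) : wp (redCons g m) = gp g * wp m := by
  cases m with
  | nil => simp [redCons]
  | cons h r =>
    by_cases hgh : g = h
    · subst hgh
      simp only [redCons, if_pos rfl, wp_cons, ← mul_assoc, gp_sq, one_mul, if_true, reduceIte]
    · simp [redCons, if_neg hgh]

theorem wp_red (l : List Gen) : wp (red l) = wp l := by
  induction l with
  | nil => rfl
  | cons g t ih => rw [red, wp_redCons, ih, wp_cons]

theorem chain_redCons {g : Gen} {m : List Gen} (hm : List.Chain' Ne m) :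
    List.Chain' Ne (redCons g m) := by
  cases m with
  | nil => simp [redCons]; exact List.isChain_singleton g
  | cons h r =>
    by_cases hgh : g = h
    · subst hgh; rw [redCons, if_pos rfl]; exact List.IsChain.tail hm
    · rw [redCons, if_neg hgh]
      exact List.isChain_cons_cons.mpr ⟨hgh, hm⟩

theorem chain_red (l : List Gen) : List.Chain' Ne (red l) := by
  induction l with
  | nil => exact List.isChain_nil
  | cons g t ih => exact chain_redCons ih

theorem cost_redCons (g : Gen) (m : List Gen) :
    costL (redCons g m) ≤ cost g + costL m := by
  cases m with
  | nil => simp [redCons]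
  | cons h r =>
    by_cases hgh : g = h
    · subst hgh
      simp only [redCons, if_pos rfl, costL_cons, if_true, reduceIte]
      omega
    · simp [redCons, if_neg hgh]

theorem cost_red_le (l : List Gen) : costL (red l) ≤ costL l := by
  induction l with
  | nil => exact le_refl _
  | cons g t ih =>
    rw [red, costL_cons]
    calc costL (redCons g (red t)) ≤ cost g + costL (red t) := cost_redCons _ _
      _ ≤ cost g + costL t := by omega

/-! ### Nucleus facts -/

theorem wp_mem_nucleus {l : List Gen} (h : l.length ≤ 1) : wp l ∈ nucleus := by
  match l, h with
  | [], _ => exact Or.inl rfl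
  | [g], _ =>
    cases g
    · exact Or.inr (Or.inl (by simp [gp]))
    · exact Or.inr (Or.inr (Or.inl (by simp [gp])))
    · exact Or.inr (Or.inr (Or.inr (Or.inl (by simp [gp]))))
    · exact Or.inr (Or.inr (Or.inr (Or.inr (by simp [gp, nucleus]))))

theorem stateL_short {l : List Gen} (h : l.length ≤ 1) (x : Bool) :
    (stateL l x).length ≤ 1 := by
  match l, h with
  | [], _ => exact Nat.zero_le 1
  | [g], _ =>
    cases g <;> cases x <;> simp [stateL, stateGen, act1L, act1]

theorem stateV_short {l : List Gen} (h : l.length ≤ 1) (v : V) :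
    (stateV l v).length ≤ 1 := by
  induction v generalizing l with
  | nil => exact h
  | cons x v ih => exact ih (stateL_short h x)

/-! ### The main contraction argument -/

def GoodP (l : List Gen) : Prop :=
  ∃ n : ℕ, ∀ v : V, n ≤ v.length → ∃ s ∈ nucleus, hasState (wp l) v s

theorem hasState_of_eq {g g' : Perm V} (h : g = g') {v : V} {s : Perm V}
    (hs : hasState g v s) : hasState g' v s := h ▸ hs

theorem main_aux : ∀ N : ℕ, ∀ l : List Gen, costL l < N → GoodP l := by
  intro N
  induction N with
  | zero => intro l h; omega
  | succ N ih =>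
    intro l hl
    by_cases hshort : (red l).length ≤ 1
    · refine ⟨0, fun v _ => ?_⟩
      refine ⟨wp (stateV (red l) v), wp_mem_nucleus (stateV_short hshort v), ?_⟩
      exact hasState_of_eq (wp_red l) (hasState_wp (red l) v)
    · push_neg at hshort
      have hlen : 2 ≤ (red l).length := hshort
      have hkey : ∀ x y : Bool, costL (stateV (red l) [x, y]) < N := by
        intro x y
        have h1 : costL (stateL (stateL (red l) x) y) < costL (red l) :=
          contract2 (chain_red l) hlen x y
        have h2 := cost_red_le l
        rw [show stateV (red l) [x, y] = stateL (stateL (red l) x) y from rfl]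
        omega
      choose nf hnf using fun x y => ih (stateV (red l) [x, y]) (hkey x y)
      refine ⟨(max (max (nf false false) (nf false true))
        (max (nf true false) (nf true true))) + 2, fun v hv => ?_⟩
      match v, hv with
      | x :: y :: v', hv =>
        have hv' : ∀ x y : Bool, nf x y ≤ v'.length := by
          simp only [List.length_cons] at hv
          intro x y
          cases x <;> cases y <;> omega
        obtain ⟨s, hsmem, hs⟩ := hnf x y v' (hv' x y)
        have hstate := hasState_wp (stateV (red l) [x, y]) v'
        have hseq : s = wp (stateV (stateV (red l) [x, y]) v') :=
          hasState_unique hs hstate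
        refine ⟨s, hsmem, ?_⟩
        have hdecomp : stateV (red l) (x :: y :: v')
            = stateV (stateV (red l) [x, y]) v' := rfl
        have := hasState_wp (red l) (x :: y :: v')
        rw [hdecomp, ← hseq] at this
        exact hasState_of_eq (wp_red l) this

theorem goodP_all (l : List Gen) : GoodP l := main_aux (costL l + 1) l (Nat.lt_succ_self _)

/-! ### Every element of `G` is a word in the generators -/

theorem wp_reverse (l : List Gen) : wp l.reverse = (wp l)⁻¹ := by
  induction l with
  | nil => simp
  | cons g t ih =>
    rw [List.reverse_cons, wp_append, ih, wp_cons]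
    simp [gp_inv, mul_inv_rev]

theorem exists_word {g : Perm V} (hg : g ∈ G) : ∃ l : List Gen, wp l = g := by
  refine Subgroup.closure_induction ?_ ⟨[], rfl⟩ ?_ ?_ hg
  · intro x hx
    rcases hx with rfl | rfl | rfl | rfl
    · exact ⟨[A], by simp [gp]⟩
    · exact ⟨[B], by simp [gp]⟩
    · exact ⟨[C], by simp [gp]⟩
    · exact ⟨[D], by simp [gp]⟩
  · rintro x y _ _ ⟨lx, rfl⟩ ⟨ly, rfl⟩
    exact ⟨lx ++ ly, by simp⟩
  · rintro x _ ⟨lx, rfl⟩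
    exact ⟨lx.reverse, wp_reverse lx⟩

/-! ### Minimality: self-reproducing states of `d` along the cycle `d →₁ b →₀ c →₁ d` -/

def vcyc : ℕ → V
  | 0 => []
  | k + 1 => true :: false :: true :: vcyc k

theorem vcyc_length (k : ℕ) : (vcyc k).length = 3 * k := by
  induction k with
  | zero => rfl
  | succ k ih => simp [vcyc, ih]; omega

theorem stateV_D_vcyc (k : ℕ) : stateV [D] (vcyc k) = [D] := by
  induction k with
  | zero => rfl
  | succ k ih => exact ih

@[simp] theorem wp_single (g : Gen) : wp [g] = gp g := by simp [wp]

theorem hasState_d_vcyc (k : ℕ) (v' : V) :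
    hasState d (vcyc k ++ v') (wp (stateV [D] v')) := by
  have h := hasState_wp [D] (vcyc k ++ v')
  rw [stateV_append, stateV_D_vcyc] at h
  simpa [gp] using h

/-- **Lemma.** `G` is contracting with nucleus `N = {1, a, b, c, d}`: every `g ∈ G`
has all its states at levels `≥ n` inside `N` for some `n`, and `N` is the minimal
finite subset of `G` with this property. -/
theorem stmt3 :
    (∀ g ∈ G, ∃ n : ℕ, ∀ v : V, n ≤ v.length → ∃ s ∈ nucleus, hasState g v s) ∧
    (∀ N' : Set (Perm V), N'.Finite → N' ⊆ ↑G →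
      (∀ g ∈ G, ∃ n : ℕ, ∀ v : V, n ≤ v.length → ∃ s ∈ N', hasState g v s) →
      nucleus ⊆ N') := by
  constructor
  · intro g hg
    obtain ⟨l, rfl⟩ := exists_word hg
    exact goodP_all l
  · intro N' _ _ hc t ht
    have key : ∀ v' : V, t = wp (stateV [Gen.D] v') → (∀ k : ℕ, True) →
        (∃ m : ℕ, ∀ k : ℕ, (vcyc k ++ v').length = 3 * k + m) → t ∈ N' := by
      rintro v' rfl _ ⟨m, hm⟩
      obtain ⟨n, hn⟩ := hc d d_mem_G
      obtain ⟨s, hsN, hs⟩ := hn (vcyc n ++ v') (by rw [hm n]; omega)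
      have hd := hasState_d_vcyc n v'
      rwa [hasState_unique hs hd] at hsN
    rcases ht with rfl | rfl | rfl | rfl | rfl
    · -- t = 1
      obtain ⟨n, hn⟩ := hc 1 (one_mem G)
      obtain ⟨s, hsN, hs⟩ := hn (List.replicate n true) (by simp)
      have h1 : hasState 1 (List.replicate n true) 1 := fun w => rfl
      rwa [hasState_unique hs h1] at hsN
    · -- t = a : state of d at vcyc k ++ [true, true]
      exact key [true, true] (by rw [show stateV [Gen.D] [true, true] = [Gen.A] from rfl]; simp [gp]) (fun _ => trivial)
        ⟨2, fun k => by simp [vcyc_length]⟩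
    · -- t = b : state of d at vcyc k ++ [true]
      exact key [true] (by rw [show stateV [Gen.D] [true] = [Gen.B] from rfl]; simp [gp]) (fun _ => trivial)
        ⟨1, fun k => by simp [vcyc_length]⟩
    · -- t = c : state of d at vcyc k ++ [true, false]
      exact key [true, false] (by rw [show stateV [Gen.D] [true, false] = [Gen.C] from rfl]; simp [gp]) (fun _ => trivial)
        ⟨2, fun k => by simp [vcyc_length]⟩
    · -- t = d : state of d at vcyc k
      exact key [] (by rw [show stateV [Gen.D] [] = [Gen.D] from rfl]; simp [gp]) (fun _ => trivial)
        ⟨0, fun k => by simp [vcyc_length]⟩
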